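/- arXiv:1709.03753 — 4 statements merged into one kernel-verified Lean document; each statement's English description precedes it below -/
import Mathlib

section
/- Let {(ρ_n, ε_n)}_{n≥1} be i.i.d. R²-valued random vectors with -∞ ≤ E(log|ρ_1|) < 0 and E((log|ε_1|)⁺) < ∞. Then the infinite series X_∞ = ε_1 + ρ_1 ε_2 + ρ_1 ρ_2 ε_3 + ... + ρ_1⋯ρ_n ε_{n+1} + ... converges absolutely with probability 1. -/
open MeasureTheory ProbabilityTheory Filter Finset
open Topology
open scoped ENNReal

lemma cesaro_diff {a : ℕ → ℝ} {m : ℝ}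
    (h : Tendsto (fun n : ℕ => (∑ i ∈ range n, a i) / n) atTop (𝓝 m)) :
    Tendsto (fun n : ℕ => a n / ((n : ℝ) + 1)) atTop (𝓝 0) := by
  set A : ℕ → ℝ := fun n => (∑ i ∈ range n, a i) / n with hA
  have key : ∀ n : ℕ, a n / ((n : ℝ) + 1) = A (n + 1) - A n * ((n : ℝ) / ((n : ℝ) + 1)) := by
    intro n
    rcases Nat.eq_zero_or_pos n with h0 | h0
    · subst h0; simp [A]
    · have hn : (n:ℝ) ≠ 0 := Nat.cast_ne_zero.2 h0.ne'
      have hn1 : (n:ℝ) + 1 ≠ 0 := by positivity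
      simp only [A, Nat.cast_add, Nat.cast_one, Finset.sum_range_succ]
      field_simp
      ring
  have h1 : Tendsto (fun n => A (n+1)) atTop (𝓝 m) := h.comp (tendsto_add_atTop_nat 1)
  have h2 : Tendsto (fun n : ℕ => (n:ℝ)/((n : ℝ)+1)) atTop (𝓝 1) :=
    tendsto_natCast_div_add_atTop 1
  have h3 := h1.sub (h.mul h2)
  rw [show m - m * 1 = 0 by ring] at h3
  exact h3.congr fun n => (key n).symm

lemma slln_comp {Ω : Type*} [MeasurableSpace Ω] (P : Measure Ω) [IsProbabilityMeasure P]
    (X : ℕ → Ω → ℝ × ℝ)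
    (hindep : iIndepFun X P)
    (hident : ∀ n, IdentDistrib (X n) (X 0) P P)
    (g : ℝ × ℝ → ℝ) (hg : Measurable g)
    (hint : Integrable (g ∘ X 0) P) :
    ∀ᵐ ω ∂P, Tendsto (fun n : ℕ => (∑ i ∈ range n, g (X i ω)) / n) atTop (𝓝 (P[g ∘ X 0])) := by
  have h1 : Pairwise (Function.onFun (IndepFun · · P) fun n => g ∘ X n) :=
    fun i j hij => (hindep.comp (fun _ => g) (fun _ => hg)).indepFun hij
  have h2 : ∀ i, IdentDistrib (g ∘ X i) (g ∘ X 0) P P := fun i => (hident i).comp hg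
  exact strong_law_ae_real _ hint h1 h2

lemma abs_le_exp_log (x : ℝ) : |x| ≤ Real.exp (Real.log |x|) := by
  rcases eq_or_ne x 0 with h | h
  · simp [h]
  · rw [Real.exp_log (abs_pos.2 h)]

lemma exists_trunc_neg_integral {Ω : Type*} [MeasurableSpace Ω] (P : Measure Ω)
    [IsProbabilityMeasure P] {f : Ω → ℝ} (hf : Measurable f)
    (hpos : ∫⁻ ω, ENNReal.ofReal (max (f ω) 0) ∂P < ⊤)
    (hneg : ∫⁻ ω, ENNReal.ofReal (max (f ω) 0) ∂P < ∫⁻ ω, ENNReal.ofReal (max (-f ω) 0) ∂P) :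
    ∃ M : ℕ, Integrable (fun ω => max (f ω) (-(M:ℝ))) P ∧
      ∫ ω, max (f ω) (-(M:ℝ)) ∂P < 0 := by
  -- monotone convergence to find M
  have hmeasmin : ∀ M : ℕ, Measurable fun ω => ENNReal.ofReal (min (max (-f ω) 0) M) :=
    fun M => ((hf.neg.max measurable_const).min measurable_const).ennreal_ofReal
  have hsup : (⨆ M : ℕ, ∫⁻ ω, ENNReal.ofReal (min (max (-f ω) 0) M) ∂P)
      = ∫⁻ ω, ENNReal.ofReal (max (-f ω) 0) ∂P := by
    rw [← lintegral_iSup hmeasmin]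
    · refine lintegral_congr fun ω => ?_
      refine le_antisymm (iSup_le fun M => ENNReal.ofReal_le_ofReal (min_le_left _ _)) ?_
      refine le_iSup_of_le ⌈max (-f ω) 0⌉₊ ?_
      rw [min_eq_left (Nat.le_ceil _)]
    · intro M N hMN ω
      exact ENNReal.ofReal_le_ofReal (min_le_min le_rfl (Nat.cast_le.2 hMN))
  rw [← hsup, lt_iSup_iff] at hneg
  obtain ⟨M, hM⟩ := hneg
  refine ⟨M, ?_⟩
  have hMnn : (0:ℝ) ≤ M := M.cast_nonneg
  -- integrability of the positive part
  have hfplus : Integrable (fun ω => max (f ω) 0) P := by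
    exact ⟨(hf.max measurable_const).aestronglyMeasurable,
      (hasFiniteIntegral_iff_ofReal (ae_of_all _ fun ω => le_max_right (f ω) 0)).2 hpos⟩
  have hfmin : Integrable (fun ω => min (max (-f ω) 0) (M:ℝ)) P := by
    refine Integrable.mono' (integrable_const (M:ℝ))
      ((hf.neg.max measurable_const).min measurable_const).aestronglyMeasurable
      (ae_of_all _ fun ω => ?_)
    rw [Real.norm_eq_abs, abs_of_nonneg (le_min (le_max_right _ _) hMnn)]
    exact min_le_right _ _
  -- decomposition
  have hdec : ∀ x : ℝ, max x (-(M:ℝ)) = max x 0 - min (max (-x) 0) M := by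
    intro x
    rcases le_total x 0 with h | h
    · rcases le_total (-x) (M:ℝ) with h2 | h2
      · rw [max_eq_left (by linarith), max_eq_right h, max_eq_left (by linarith),
          min_eq_left h2]; ring
      · rw [max_eq_right (by linarith), max_eq_right h, max_eq_left (by linarith),
          min_eq_right h2]; ring
    · rw [max_eq_left (by linarith : -(M:ℝ) ≤ x), max_eq_left h,
        max_eq_right (by linarith : -x ≤ 0), min_eq_left hMnn]; ring
  have hint : Integrable (fun ω => max (f ω) (-(M:ℝ))) P := by
    refine (hfplus.sub hfmin).congr (ae_of_all _ fun ω => ?_)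
    exact (hdec (f ω)).symm
  refine ⟨hint, ?_⟩
  have hie : ∫ ω, max (f ω) (-(M:ℝ)) ∂P
      = (∫ ω, max (f ω) 0 ∂P) - ∫ ω, min (max (-f ω) 0) (M:ℝ) ∂P := by
    rw [← integral_sub hfplus hfmin]
    exact integral_congr_ae (ae_of_all _ fun ω => hdec (f ω))
  have he1 : ∫ ω, max (f ω) 0 ∂P = (∫⁻ ω, ENNReal.ofReal (max (f ω) 0) ∂P).toReal :=
    integral_eq_lintegral_of_nonneg_ae (ae_of_all _ fun ω => le_max_right (f ω) 0)
      (hf.max measurable_const).aestronglyMeasurable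
  have he2 : ∫ ω, min (max (-f ω) 0) (M:ℝ) ∂P
      = (∫⁻ ω, ENNReal.ofReal (min (max (-f ω) 0) M) ∂P).toReal :=
    integral_eq_lintegral_of_nonneg_ae (ae_of_all _ fun ω => le_min (le_max_right _ _) hMnn)
      ((hf.neg.max measurable_const).min measurable_const).aestronglyMeasurable
  have hMfin : ∫⁻ ω, ENNReal.ofReal (min (max (-f ω) 0) M) ∂P ≤ (M : ℝ≥0∞) := by
    calc ∫⁻ ω, ENNReal.ofReal (min (max (-f ω) 0) M) ∂P
        ≤ ∫⁻ _, ENNReal.ofReal (M:ℝ) ∂P :=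
          lintegral_mono fun ω => ENNReal.ofReal_le_ofReal (min_le_right _ _)
      _ = ENNReal.ofReal (M:ℝ) := by simp
      _ = (M : ℝ≥0∞) := by simp [ENNReal.ofReal_natCast]
  have hMfin' : ∫⁻ ω, ENNReal.ofReal (min (max (-f ω) 0) M) ∂P ≠ ⊤ :=
    (hMfin.trans_lt (by simp)).ne
  rw [hie, he1, he2, sub_neg]
  exact ENNReal.toReal_lt_toReal hpos.ne hMfin' |>.2 hM

/-- For i.i.d. pairs `(ρ n, ε n)` (0-indexed: `ρ n` stands for ρ_{n+1})
with `-∞ ≤ E(log|ρ₁|) < 0` (encoded: the positive part of `log|ρ₁|` has finite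
lintegral and strictly smaller lintegral than the negative part) and
`E((log|ε₁|)⁺) < ∞`, the series `Σ_n ρ₁⋯ρ_n ε_{n+1}` converges absolutely a.s. -/
theorem stmt0 {Ω : Type*} [MeasurableSpace Ω] (P : Measure Ω) [IsProbabilityMeasure P]
    (ρ ε : ℕ → Ω → ℝ)
    (hmeas : ∀ n, Measurable (fun ω => (ρ n ω, ε n ω)))
    (hindep : iIndepFun (fun n ω => (ρ n ω, ε n ω)) P)
    (hident : ∀ n, IdentDistrib (fun ω => (ρ n ω, ε n ω)) (fun ω => (ρ 0 ω, ε 0 ω)) P P)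
    (hρpos : ∫⁻ ω, ENNReal.ofReal (max (Real.log |ρ 0 ω|) 0) ∂P < ⊤)
    (hρneg : ∫⁻ ω, ENNReal.ofReal (max (Real.log |ρ 0 ω|) 0) ∂P
      < ∫⁻ ω, ENNReal.ofReal (max (-Real.log |ρ 0 ω|) 0) ∂P)
    (hεlog : ∫⁻ ω, ENNReal.ofReal (max (Real.log |ε 0 ω|) 0) ∂P < ⊤) :
    ∀ᵐ ω ∂P, Summable (fun n => |∏ i ∈ Finset.range n, ρ i ω| * |ε n ω|) := by
  have hρmeas : ∀ n, Measurable (ρ n) := fun n => measurable_fst.comp (hmeas n)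
  have hεmeas : ∀ n, Measurable (ε n) := fun n => measurable_snd.comp (hmeas n)
  have hf : Measurable (fun ω => Real.log |ρ 0 ω|) :=
    Real.measurable_log.comp (hρmeas 0).abs
  obtain ⟨M, hYint, hYneg⟩ := exists_trunc_neg_integral P hf hρpos hρneg
  set X : ℕ → Ω → ℝ × ℝ := fun n ω => (ρ n ω, ε n ω) with hX
  set g₁ : ℝ × ℝ → ℝ := fun p => max (Real.log |p.1|) (-(M:ℝ)) with hg₁def
  set g₂ : ℝ × ℝ → ℝ := fun p => max (Real.log |p.2|) 0 with hg₂def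
  have hg₁ : Measurable g₁ :=
    (Real.measurable_log.comp measurable_fst.abs).max measurable_const
  have hg₂ : Measurable g₂ :=
    (Real.measurable_log.comp measurable_snd.abs).max measurable_const
  have hint₁ : Integrable (g₁ ∘ X 0) P := hYint
  have hint₂ : Integrable (g₂ ∘ X 0) P := by
    refine ⟨(hg₂.comp (hmeas 0)).aestronglyMeasurable, ?_⟩
    exact (hasFiniteIntegral_iff_ofReal
      (ae_of_all _ fun ω => le_max_right (Real.log |ε 0 ω|) 0)).2 hεlog
  set I : ℝ := P[g₁ ∘ X 0] with hIdef
  have hI : I < 0 := hYneg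
  have T1 := slln_comp P X hindep hident g₁ hg₁ hint₁
  have T2 := slln_comp P X hindep hident g₂ hg₂ hint₂
  filter_upwards [T1, T2] with ω h1 h2
  -- from Cesàro limit: individual terms over n tend to 0
  have h2' : Tendsto (fun n : ℕ => g₂ (X n ω) / ((n:ℝ) + 1)) atTop (𝓝 0) := cesaro_diff h2
  have ev1 : ∀ᶠ n : ℕ in atTop, (∑ i ∈ range n, g₁ (X i ω)) / n < I / 2 :=
    h1.eventually_lt_const (by linarith)
  have ev2 : ∀ᶠ n : ℕ in atTop, g₂ (X n ω) / ((n:ℝ) + 1) < -(I / 8) :=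
    h2'.eventually_lt_const (by linarith)
  set r : ℝ := Real.exp (I / 4) with hrdef
  have hr0 : 0 ≤ r := (Real.exp_pos _).le
  have hr1 : r < 1 := Real.exp_lt_one_iff.2 (by linarith)
  have key : ∀ᶠ n : ℕ in atTop, |∏ i ∈ Finset.range n, ρ i ω| * |ε n ω| ≤ r ^ n := by
    filter_upwards [ev1, ev2, eventually_ge_atTop 1] with n hn1 hn2 hn3
    have hnpos : (0:ℝ) < n := by exact_mod_cast hn3
    have hn1' : ∑ i ∈ range n, g₁ (X i ω) < I / 2 * n := (div_lt_iff₀ hnpos).1 hn1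
    have hn2' : g₂ (X n ω) < -(I / 8) * ((n:ℝ) + 1) := (div_lt_iff₀ (by positivity)).1 hn2
    have hn2'' : g₂ (X n ω) ≤ -(I / 4) * n := by
      have h1n : (1:ℝ) ≤ n := by exact_mod_cast hn3
      have : (n:ℝ) + 1 ≤ 2 * n := by linarith
      nlinarith
    have hprod : |∏ i ∈ Finset.range n, ρ i ω|
        ≤ Real.exp (∑ i ∈ range n, Real.log |ρ i ω|) := by
      rw [Finset.abs_prod, Real.exp_sum]
      exact Finset.prod_le_prod (fun i _ => abs_nonneg _) (fun i _ => abs_le_exp_log _)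
    have hS : ∑ i ∈ range n, Real.log |ρ i ω| ≤ ∑ i ∈ range n, g₁ (X i ω) :=
      Finset.sum_le_sum fun i _ => le_max_left _ _
    have hε : |ε n ω| ≤ Real.exp (-(I / 4) * n) :=
      (abs_le_exp_log _).trans (Real.exp_le_exp.2 ((le_max_left _ _).trans hn2''))
    calc |∏ i ∈ Finset.range n, ρ i ω| * |ε n ω|
        ≤ Real.exp (I / 2 * n) * Real.exp (-(I / 4) * n) := by
          refine mul_le_mul ?_ hε (abs_nonneg _) (Real.exp_nonneg _)
          exact hprod.trans (Real.exp_le_exp.2 (hS.trans hn1'.le))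
      _ = Real.exp ((n:ℝ) * (I / 4)) := by rw [← Real.exp_add]; ring_nf
      _ = r ^ n := by rw [← Real.exp_nat_mul]
  obtain ⟨N, hN⟩ := eventually_atTop.1 key
  rw [← summable_nat_add_iff N]
  refine Summable.of_nonneg_of_le (fun n => mul_nonneg (abs_nonneg _) (abs_nonneg _))
    (fun n => hN (n + N) (by omega)) ?_
  exact (((summable_geometric_of_lt_one hr0 hr1).mul_right (r ^ N)).congr
    fun n => by rw [pow_add])
end

section
/- Let {(ρ_n, ε_n)}_{n≥1} be i.i.d. with -∞ ≤ E(log|ρ_1|) < 0 and E((log|ε_1|)⁺) < ∞, let X_0 be a real random variable independent of the sequence, and define X_n = ρ_n X_{n-1} + ε_n. Then X_n converges in distribution as n → ∞ to X_∞ = Σ_{n≥0} ρ_1⋯ρ_n ε_{n+1} (with the convention that the n=0 term is ε_1). -/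
open MeasureTheory ProbabilityTheory Filter Finset Topology

namespace Stmt3Aux


/-- The forward iteration `x ↦ v₀.1 x + v₀.2 ↦ ...`. -/
noncomputable def iter : ℕ → ℝ × (ℕ → ℝ × ℝ) → ℝ
  | 0 => fun p => p.1
  | n + 1 => fun p => (p.2 n).1 * iter n p + (p.2 n).2

lemma measurable_iter (n : ℕ) : Measurable (iter n) := by
  induction n with
  | zero => exact measurable_fst
  | succ n ih =>
      have h1 : Measurable fun p : ℝ × (ℕ → ℝ × ℝ) => p.2 n :=
        (measurable_pi_apply n).comp measurable_snd
      exact ((measurable_fst.comp h1).mul ih).add (measurable_snd.comp h1)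

lemma iter_congr (n : ℕ) {x : ℝ} {v w : ℕ → ℝ × ℝ} (h : ∀ j < n, v j = w j) :
    iter n (x, v) = iter n (x, w) := by
  induction n with
  | zero => rfl
  | succ n ih =>
      simp only [iter]
      rw [ih fun j hj => h j (hj.trans (Nat.lt_succ_self n)), h n (Nat.lt_succ_self n)]

lemma iter_apply (n : ℕ) (x : ℝ) (v : ℕ → ℝ × ℝ) :
    iter n (x, v) = (v n).1 * iter n (x, v) + (v n).2 → True := fun _ => trivial

lemma iter_rev (n : ℕ) (x : ℝ) (v : ℕ → ℝ × ℝ) :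
    iter n (x, fun j => v (n - 1 - j)) =
      (∑ k ∈ range n, (∏ i ∈ range k, (v i).1) * (v k).2)
        + (∏ i ∈ range n, (v i).1) * x := by
  induction n generalizing v with
  | zero => simp [iter]
  | succ n ih =>
      simp only [iter]
      have hw : iter n (x, fun j => v (n + 1 - 1 - j))
          = iter n (x, fun j => (fun m => v (m + 1)) (n - 1 - j)) := by
        refine iter_congr n fun j hj => ?_
        simp only
        congr 1
        omega
      have hn : n + 1 - 1 - n = 0 := by omega
      rw [hw, ih (fun m => v (m + 1))]
      simp only [hn]
      rw [Finset.sum_range_succ' (fun k => (∏ i ∈ range k, (v i).1) * (v k).2) n,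
        Finset.prod_range_succ' (fun i => (v i).1) n]
      simp only [Finset.range_zero, Finset.prod_empty, one_mul]
      rw [mul_add, Finset.mul_sum]
      have hs : ∀ k ∈ range n,
          (v 0).1 * ((∏ i ∈ range k, (v (i + 1)).1) * (v (k + 1)).2)
            = (∏ i ∈ range (k + 1), (v i).1) * (v (k + 1)).2 := by
        intro k _
        rw [Finset.prod_range_succ' (fun i => (v i).1) k]
        ring
      rw [Finset.sum_congr rfl hs]
      ring



lemma aux_pi {Ω : Type*} [MeasurableSpace Ω] (P : Measure Ω) [IsProbabilityMeasure P]
    (g : ℕ → Ω → ℝ × ℝ) (hg : ∀ m, Measurable (g m))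
    (hind : iIndepFun g P)
    (hid : ∀ m, IdentDistrib (g m) (g 0) P P)
    {n : ℕ} (φ : Fin n → ℕ) (hφ : Function.Injective φ) :
    P.map (fun ω i => g (φ i) ω) = Measure.pi (fun _ : Fin n => P.map (g 0)) := by
  have hg0 : IsProbabilityMeasure (P.map (g 0)) := Measure.isProbabilityMeasure_map (hg 0).aemeasurable
  refine (Measure.pi_eq fun s hs => ?_).symm
  set t : ℕ → Set (ℝ × ℝ) := fun m => ⋂ i : Fin n, ⋂ (_ : φ i = m), s i with ht
  have htm : ∀ m, MeasurableSet (t m) := fun m =>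
    MeasurableSet.iInter fun i => MeasurableSet.iInter fun _ => hs i
  have hpre : (fun ω i => g (φ i) ω) ⁻¹' Set.pi Set.univ s
      = ⋂ m ∈ Finset.image φ Finset.univ, g m ⁻¹' t m := by
    ext ω
    simp only [Set.mem_preimage, Set.mem_pi, Set.mem_univ, forall_true_left, Set.mem_iInter,
      Finset.mem_image, Finset.mem_univ, true_and, ht]
    constructor
    · rintro h m ⟨i, rfl⟩ j hj
      cases hφ hj
      exact h i
    · intro h i
      exact h (φ i) ⟨i, rfl⟩ i rfl
  have htphi : ∀ i : Fin n, t (φ i) = s i := by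
    intro i
    apply Set.Subset.antisymm
    · exact Set.iInter_subset_of_subset i (by simp)
    · refine Set.subset_iInter fun j => Set.subset_iInter fun hj => ?_
      cases hφ hj
      exact le_refl _
  rw [Measure.map_apply (measurable_pi_lambda _ fun i => hg (φ i)) (MeasurableSet.univ_pi hs),
    hpre, hind.measure_inter_preimage_eq_mul _ (fun m _ => htm m),
    Finset.prod_image (fun i _ j _ h => hφ h)]
  refine Finset.prod_congr rfl fun i _ => ?_
  rw [htphi i, (hid (φ i)).measure_mem_eq (hs i), Measure.map_apply (hg 0) (hs i)]



lemma ofReal_max_zero (x : ℝ) : ENNReal.ofReal (max x 0) = ENNReal.ofReal x := by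
  rcases le_total x 0 with h | h
  · rw [max_eq_right h, ENNReal.ofReal_zero, eq_comm, ENNReal.ofReal_eq_zero]
    exact h
  · rw [max_eq_left h]

/-- Existence of a truncation level `M` with negative truncated mean. -/
lemma exists_trunc {Ω : Type*} [MeasurableSpace Ω] (P : Measure Ω) [IsProbabilityMeasure P]
    (L : Ω → ℝ) (hL : Measurable L)
    (hpos : ∫⁻ ω, ENNReal.ofReal (L ω) ∂P < ⊤)
    (hneg : ∫⁻ ω, ENNReal.ofReal (L ω) ∂P < ∫⁻ ω, ENNReal.ofReal (-L ω) ∂P) :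
    ∃ M : ℕ, Integrable (fun ω => max (L ω) (-(M : ℝ))) P ∧
      ∫ ω, max (L ω) (-(M : ℝ)) ∂P < 0 := by
  have hptw : ∀ ω, (⨆ M : ℕ, ENNReal.ofReal (min (-L ω) (M : ℝ))) = ENNReal.ofReal (-L ω) := by
    intro ω
    apply le_antisymm
    · exact iSup_le fun M => ENNReal.ofReal_le_ofReal (min_le_left _ _)
    · obtain ⟨M, hM⟩ := exists_nat_ge (-L ω)
      exact le_iSup_of_le M (by rw [min_eq_left hM])
  have hmct : (⨆ M : ℕ, ∫⁻ ω, ENNReal.ofReal (min (-L ω) (M : ℝ)) ∂P)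
      = ∫⁻ ω, ENNReal.ofReal (-L ω) ∂P := by
    rw [← lintegral_iSup]
    · exact lintegral_congr fun ω => hptw ω
    · exact fun M => ENNReal.measurable_ofReal.comp (hL.neg.min measurable_const)
    · intro M M' hMM' ω
      exact ENNReal.ofReal_le_ofReal (min_le_min le_rfl (by exact_mod_cast hMM'))
  have hlt : ∫⁻ ω, ENNReal.ofReal (L ω) ∂P
      < ⨆ M : ℕ, ∫⁻ ω, ENNReal.ofReal (min (-L ω) (M : ℝ)) ∂P := hmct ▸ hneg
  obtain ⟨M, hM⟩ := lt_iSup_iff.1 hlt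
  have hMfin : ∫⁻ ω, ENNReal.ofReal (min (-L ω) (M : ℝ)) ∂P < ⊤ := by
    calc ∫⁻ ω, ENNReal.ofReal (min (-L ω) (M : ℝ)) ∂P
        ≤ ∫⁻ _, ENNReal.ofReal (M : ℝ) ∂P :=
          lintegral_mono fun ω => ENNReal.ofReal_le_ofReal (min_le_right _ _)
      _ = ENNReal.ofReal (M : ℝ) := by rw [lintegral_const, measure_univ, mul_one]
      _ < ⊤ := ENNReal.ofReal_lt_top
  have hint : Integrable (fun ω => max (L ω) (-(M : ℝ))) P := by
    have h1 : Integrable (fun ω => max (L ω) 0) P := by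
      refine ⟨(hL.max measurable_const).aestronglyMeasurable,
        (hasFiniteIntegral_iff_ofReal (Eventually.of_forall fun ω => le_max_right _ _)).2 ?_⟩
      calc ∫⁻ ω, ENNReal.ofReal (max (L ω) 0) ∂P
          = ∫⁻ ω, ENNReal.ofReal (L ω) ∂P := lintegral_congr fun ω => ofReal_max_zero _
        _ < ⊤ := hpos
    have hgint : Integrable (fun ω => max (L ω) 0 + (M : ℝ)) P := h1.add (integrable_const _)
    refine hgint.mono' ((hL.max measurable_const).aestronglyMeasurable)
      (Eventually.of_forall fun ω => ?_)
    rw [Real.norm_eq_abs]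
    rcases abs_cases (max (L ω) (-(M : ℝ))) with ⟨he, _⟩ | ⟨he, _⟩ <;> rw [he]
    · exact max_le (by linarith [le_max_left (L ω) 0, Nat.cast_nonneg (α := ℝ) M])
        (by linarith [le_max_right (L ω) 0, Nat.cast_nonneg (α := ℝ) M])
    · have := le_max_right (L ω) (-(M : ℝ))
      linarith [le_max_right (L ω) 0]
  refine ⟨M, hint, ?_⟩
  rw [integral_eq_lintegral_pos_part_sub_lintegral_neg_part hint]
  have e1 : ∫⁻ ω, ENNReal.ofReal (max (L ω) (-(M : ℝ))) ∂P = ∫⁻ ω, ENNReal.ofReal (L ω) ∂P := by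
    refine lintegral_congr fun ω => ?_
    rcases le_total (L ω) (-(M : ℝ)) with h | h
    · rw [max_eq_right h, ENNReal.ofReal_eq_zero.2 (neg_nonpos.2 (Nat.cast_nonneg M)), eq_comm,
        ENNReal.ofReal_eq_zero]
      exact h.trans (neg_nonpos.2 (Nat.cast_nonneg M))
    · rw [max_eq_left h]
  have e2 : ∫⁻ ω, ENNReal.ofReal (-max (L ω) (-(M : ℝ))) ∂P
      = ∫⁻ ω, ENNReal.ofReal (min (-L ω) (M : ℝ)) ∂P := by
    refine lintegral_congr fun ω => ?_
    congr 1
    rw [← min_neg_neg, neg_neg]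
  rw [e1, e2, sub_neg]
  exact (ENNReal.toReal_lt_toReal hpos.ne hMfin.ne).2 hM


lemma abs_le_exp_log (x : ℝ) : |x| ≤ Real.exp (Real.log |x|) := by
  rcases eq_or_ne x 0 with rfl | h
  · simpa using (Real.exp_pos (Real.log |(0 : ℝ)|)).le
  · rw [Real.exp_log (abs_pos.2 h)]

set_option maxHeartbeats 1000000 in
lemma ae_tendsto {Ω : Type*} [MeasurableSpace Ω] (P : Measure Ω) [IsProbabilityMeasure P]
    (ρ ε : ℕ → Ω → ℝ) (X0 : Ω → ℝ)
    (hmeas : ∀ n, Measurable (fun ω => (ρ n ω, ε n ω)))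
    (hindep : iIndepFun (fun n ω => (ρ n ω, ε n ω)) P)
    (hident : ∀ n, IdentDistrib (fun ω => (ρ n ω, ε n ω)) (fun ω => (ρ 0 ω, ε 0 ω)) P P)
    (hρpos : ∫⁻ ω, ENNReal.ofReal (Real.log |ρ 0 ω|) ∂P < ⊤)
    (hρneg : ∫⁻ ω, ENNReal.ofReal (Real.log |ρ 0 ω|) ∂P
      < ∫⁻ ω, ENNReal.ofReal (-Real.log |ρ 0 ω|) ∂P)
    (hεlog : ∫⁻ ω, ENNReal.ofReal (max (Real.log |ε 0 ω|) 0) ∂P < ⊤) :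
    ∀ᵐ ω ∂P, Tendsto (fun n => (∑ k ∈ range n, (∏ i ∈ range k, ρ i ω) * ε k ω)
        + (∏ i ∈ range n, ρ i ω) * X0 ω) atTop
      (𝓝 (∑' k, (∏ i ∈ range k, ρ i ω) * ε k ω)) := by
  have mρ : ∀ i, Measurable (ρ i) := fun i => (measurable_fst.comp (hmeas i) : _)
  have mε : ∀ i, Measurable (ε i) := fun i => (measurable_snd.comp (hmeas i) : _)
  -- Step 1: truncation level
  obtain ⟨M, hint, hmean⟩ := exists_trunc P (fun ω => Real.log |ρ 0 ω|)
    (Real.measurable_log.comp (mρ 0).abs) hρpos hρneg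
  set m : ℝ := ∫ ω, max (Real.log |ρ 0 ω|) (-(M : ℝ)) ∂P with hm
  have hm0 : m < 0 := hmean
  -- Step 2: strong law of large numbers for truncated logs
  set φ : ℝ × ℝ → ℝ := fun p => max (Real.log |p.1|) (-(M : ℝ)) with hφdef
  have hφmeas : Measurable φ :=
    (Real.measurable_log.comp measurable_fst.abs).max measurable_const
  set Z : ℕ → Ω → ℝ := fun i ω => max (Real.log |ρ i ω|) (-(M : ℝ)) with hZdef
  have hZ_eq : ∀ i, Z i = φ ∘ (fun ω => (ρ i ω, ε i ω)) := fun i => rfl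
  have hZint : Integrable (Z 0) P := hint
  have hZindep : Pairwise (Function.onFun (IndepFun · · P) Z) := by
    intro i j hij
    have := (hindep.indepFun hij).comp hφmeas hφmeas
    rwa [← hZ_eq i, ← hZ_eq j] at this
  have hZident : ∀ i, IdentDistrib (Z i) (Z 0) P P := by
    intro i
    have := (hident i).comp hφmeas
    rwa [← hZ_eq i, ← hZ_eq 0] at this
  have hslln := strong_law_ae_real Z hZint hZindep hZident
  -- Step 3: Borel–Cantelli for the noise terms
  set δ : ℝ := -m / 4 with hδdef
  have hδ : 0 < δ := by rw [hδdef]; linarith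
  set g : Ω → ℝ := fun ω => max (Real.log |ε 0 ω|) 0 with hgdef
  have hgmeas : Measurable g := (Real.measurable_log.comp (mε 0).abs).max measurable_const
  have hgint : Integrable g P :=
    ⟨hgmeas.aestronglyMeasurable,
      (hasFiniteIntegral_iff_ofReal (Eventually.of_forall fun ω => le_max_right _ _)).2 hεlog⟩
  have hsum_lt : (∑' n : ℕ, P {ω | g ω / δ ∈ Set.Ioi (n : ℝ)}) < ⊤ := by
    letI : MeasureSpace Ω := ⟨P⟩
    haveI : IsProbabilityMeasure (ℙ : Measure Ω) := ‹IsProbabilityMeasure P›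
    exact ProbabilityTheory.tsum_prob_mem_Ioi_lt_top (hgint.div_const δ)
      (fun ω => div_nonneg (le_max_right _ _) hδ.le)
  set s : ℕ → Set Ω := fun n => ε n ⁻¹' {x : ℝ | δ * ((n : ℝ) + 1) ≤ Real.log |x|} with hsdef
  have hsum : (∑' n, P (s n)) ≠ ⊤ := by
    have hle : ∀ n : ℕ, P (s n) ≤ P {ω | g ω / δ ∈ Set.Ioi (n : ℝ)} := by
      intro n
      have hidε : IdentDistrib (ε n) (ε 0) P P := (hident n).comp measurable_snd
      have hBn : MeasurableSet {x : ℝ | δ * ((n : ℝ) + 1) ≤ Real.log |x|} :=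
        measurableSet_le measurable_const (Real.measurable_log.comp measurable_abs)
      rw [hsdef]
      simp only
      rw [hidε.measure_mem_eq hBn]
      apply measure_mono
      intro ω hω
      simp only [Set.mem_preimage, Set.mem_setOf_eq, Set.mem_Ioi] at *
      have h1 : δ * ((n : ℝ) + 1) ≤ g ω := hω.trans (le_max_left _ _)
      rw [lt_div_iff₀ hδ]
      nlinarith
    exact (lt_of_le_of_lt (ENNReal.tsum_le_tsum hle) hsum_lt).ne
  have hBC := ae_eventually_notMem hsum
  -- Step 4: combine
  filter_upwards [hslln, hBC] with ω h1 h2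
  have h1' : ∀ᶠ n : ℕ in atTop, (∑ i ∈ range n, Z i ω) / n < m / 2 :=
    h1.eventually_lt_const (by linarith)
  obtain ⟨N, hN⟩ := eventually_atTop.1 ((h1'.and h2).and (eventually_ge_atTop 1))
  have hprod : ∀ n ≥ N, |∏ i ∈ range n, ρ i ω| ≤ Real.exp (m / 2 * n) := by
    intro n hn
    have hz := ((hN n hn).1).1
    have hn1 : (1 : ℕ) ≤ n := (hN n hn).2
    have hnpos : (0 : ℝ) < n := by exact_mod_cast hn1
    have hsumZ : (∑ i ∈ range n, Z i ω) ≤ m / 2 * n := by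
      have := (div_lt_iff₀ hnpos).1 hz
      linarith
    have hsumL : (∑ i ∈ range n, Real.log |ρ i ω|) ≤ m / 2 * n :=
      le_trans (Finset.sum_le_sum fun i _ => le_max_left _ _) hsumZ
    calc |∏ i ∈ range n, ρ i ω| = ∏ i ∈ range n, |ρ i ω| := Finset.abs_prod _ _
      _ ≤ ∏ i ∈ range n, Real.exp (Real.log |ρ i ω|) :=
          Finset.prod_le_prod (fun i _ => abs_nonneg _) (fun i _ => abs_le_exp_log _)
      _ = Real.exp (∑ i ∈ range n, Real.log |ρ i ω|) := (Real.exp_sum _ _).symm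
      _ ≤ Real.exp (m / 2 * n) := Real.exp_le_exp.2 hsumL
  have hε' : ∀ n ≥ N, |ε n ω| ≤ Real.exp (δ * ((n : ℝ) + 1)) := by
    intro n hn
    have hns := ((hN n hn).1).2
    have hlog : Real.log |ε n ω| ≤ δ * ((n : ℝ) + 1) := le_of_not_ge hns
    calc |ε n ω| ≤ Real.exp (Real.log |ε n ω|) := abs_le_exp_log _
      _ ≤ Real.exp (δ * ((n : ℝ) + 1)) := Real.exp_le_exp.2 hlog
  set r : ℝ := Real.exp (m / 4) with hrdef
  have hr0 : 0 ≤ r := (Real.exp_pos _).le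
  have hr1 : r < 1 := Real.exp_lt_one_iff.2 (by linarith)
  have hterm : ∀ n ≥ N, |(∏ i ∈ range n, ρ i ω) * ε n ω| ≤ Real.exp δ * r ^ n := by
    intro n hn
    rw [abs_mul]
    calc |∏ i ∈ range n, ρ i ω| * |ε n ω|
        ≤ Real.exp (m / 2 * n) * Real.exp (δ * ((n : ℝ) + 1)) :=
          mul_le_mul (hprod n hn) (hε' n hn) (abs_nonneg _) (Real.exp_nonneg _)
      _ = Real.exp δ * r ^ n := by
          rw [hrdef, ← Real.exp_nat_mul, ← Real.exp_add, ← Real.exp_add]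
          congr 1
          rw [hδdef]
          ring
  have hsummable : Summable (fun k => (∏ i ∈ range k, ρ i ω) * ε k ω) := by
    apply Summable.of_abs
    rw [← summable_nat_add_iff N]
    refine Summable.of_nonneg_of_le (fun k => abs_nonneg _)
      (fun k => hterm (k + N) (Nat.le_add_left N k)) ?_
    exact (summable_nat_add_iff N).2 ((summable_geometric_of_lt_one hr0 hr1).mul_left (Real.exp δ))
  have htail : Tendsto (fun n => (∏ i ∈ range n, ρ i ω) * X0 ω) atTop (𝓝 0) := by
    refine squeeze_zero_norm' (a := fun n : ℕ => Real.exp (m / 2) ^ n * |X0 ω|)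
      (eventually_atTop.2 ⟨N, fun n hn => ?_⟩) ?_
    · rw [Real.norm_eq_abs, abs_mul]
      show |∏ i ∈ range n, ρ i ω| * |X0 ω| ≤ Real.exp (m / 2) ^ n * |X0 ω|
      rw [← Real.exp_nat_mul]
      exact mul_le_mul_of_nonneg_right (by rw [mul_comm]; exact hprod n hn) (abs_nonneg _)
    · simpa using (tendsto_pow_atTop_nhds_zero_of_lt_one
        (Real.exp_nonneg _) (Real.exp_lt_one_iff.2 (by linarith))).mul_const |X0 ω|
  have hps : Tendsto (fun n => ∑ k ∈ range n, (∏ i ∈ range k, ρ i ω) * ε k ω) atTop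
      (𝓝 (∑' k, (∏ i ∈ range k, ρ i ω) * ε k ω)) := hsummable.hasSum.tendsto_sum_nat
  simpa using hps.add htail


end Stmt3Aux

/-- For the RCAR(1) sequence `X_n = ρ_n X_{n-1} + ε_n` with i.i.d. pairs
`(ρ n, ε n)` (0-indexed: `ρ n, ε n` stand for ρ_{n+1}, ε_{n+1}) independent of `X 0`,
under `-∞ ≤ E(log|ρ₁|) < 0` and `E((log|ε₁|)⁺) < ∞`, `X n` converges in distribution
(tested against bounded continuous functions) to
`X_∞ = Σ_{n≥0} ρ₁⋯ρ_n ε_{n+1} = ∑' n, (∏_{i<n} ρ i) * ε n`. -/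
theorem stmt3 {Ω : Type*} [MeasurableSpace Ω] (P : Measure Ω) [IsProbabilityMeasure P]
    (ρ ε : ℕ → Ω → ℝ) (X0 : Ω → ℝ) (X : ℕ → Ω → ℝ)
    (hmeas : ∀ n, Measurable (fun ω => (ρ n ω, ε n ω)))
    (hX0meas : Measurable X0)
    (hindep : iIndepFun (fun n ω => (ρ n ω, ε n ω)) P)
    (hident : ∀ n, IdentDistrib (fun ω => (ρ n ω, ε n ω)) (fun ω => (ρ 0 ω, ε 0 ω)) P P)
    (hX0indep : IndepFun X0 (fun ω => fun n => (ρ n ω, ε n ω)) P)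
    (hX0 : ∀ ω, X 0 ω = X0 ω)
    (hXrec : ∀ n ω, X (n + 1) ω = ρ n ω * X n ω + ε n ω)
    (hρpos : ∫⁻ ω, ENNReal.ofReal (max (Real.log |ρ 0 ω|) 0) ∂P < ⊤)
    (hρneg : ∫⁻ ω, ENNReal.ofReal (max (Real.log |ρ 0 ω|) 0) ∂P
      < ∫⁻ ω, ENNReal.ofReal (max (-Real.log |ρ 0 ω|) 0) ∂P)
    (hεlog : ∫⁻ ω, ENNReal.ofReal (max (Real.log |ε 0 ω|) 0) ∂P < ⊤) :
    ∀ F : BoundedContinuousFunction ℝ ℝ,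
      Tendsto (fun n => ∫ ω, F (X n ω) ∂P) atTop
        (𝓝 (∫ ω, F (∑' n, (∏ i ∈ Finset.range n, ρ i ω) * ε n ω) ∂P)) := by
  classical
  intro F
  have hρpos' : ∫⁻ ω, ENNReal.ofReal (Real.log |ρ 0 ω|) ∂P < ⊤ := by
    simpa only [Stmt3Aux.ofReal_max_zero] using hρpos
  have hρneg' : ∫⁻ ω, ENNReal.ofReal (Real.log |ρ 0 ω|) ∂P
      < ∫⁻ ω, ENNReal.ofReal (-Real.log |ρ 0 ω|) ∂P := by
    simpa only [Stmt3Aux.ofReal_max_zero] using hρneg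
  set q : ℕ → Ω → ℝ × ℝ := fun n ω => (ρ n ω, ε n ω) with hq
  have mρ : ∀ i, Measurable (ρ i) := fun i => (measurable_fst.comp (hmeas i) : _)
  have mε : ∀ i, Measurable (ε i) := fun i => (measurable_snd.comp (hmeas i) : _)
  set Y : ℕ → Ω → ℝ := fun n ω =>
    (∑ k ∈ range n, (∏ i ∈ range k, ρ i ω) * ε k ω) + (∏ i ∈ range n, ρ i ω) * X0 ω with hY
  have hYmeas : ∀ n, Measurable (Y n) := by
    intro n
    apply Measurable.add
    · exact Finset.measurable_sum _ fun k _ =>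
        (Finset.measurable_prod _ fun i _ => mρ i).mul (mε k)
    · exact (Finset.measurable_prod _ fun i _ => mρ i).mul hX0meas
  have hXY : ∀ n, IdentDistrib (X n) (Y n) P P := by
    intro n
    have hVmeas : Measurable (fun ω (i : Fin n) => q i ω) :=
      measurable_pi_lambda _ fun i => hmeas i
    have hWmeas : Measurable (fun ω (i : Fin n) => q (n - 1 - (i : ℕ)) ω) :=
      measurable_pi_lambda _ fun i => hmeas _
    have hres : Measurable (fun v : ℕ → ℝ × ℝ => (fun i : Fin n => v i)) :=
      measurable_pi_lambda _ fun i => measurable_pi_apply _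
    have hres' : Measurable (fun v : ℕ → ℝ × ℝ => (fun i : Fin n => v (n - 1 - (i : ℕ)))) :=
      measurable_pi_lambda _ fun i => measurable_pi_apply _
    have h1 : IndepFun X0 (fun ω (i : Fin n) => q i ω) P := by
      have := hX0indep.comp measurable_id hres
      exact this
    have h2 : IndepFun X0 (fun ω (i : Fin n) => q (n - 1 - (i : ℕ)) ω) P := by
      have := hX0indep.comp measurable_id hres'
      exact this
    have hφ1 : Function.Injective (fun i : Fin n => (i : ℕ)) := Fin.val_injective
    have hφ2 : Function.Injective (fun i : Fin n => n - 1 - (i : ℕ)) := by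
      intro i j hij
      simp only at hij
      have hi := i.isLt
      have hj := j.isLt
      ext
      omega
    have e1 : P.map (fun ω (i : Fin n) => q i ω)
        = Measure.pi (fun _ : Fin n => P.map (q 0)) :=
      Stmt3Aux.aux_pi P q hmeas hindep (fun m => hident m) (fun i : Fin n => (i : ℕ)) hφ1
    have e2 : P.map (fun ω (i : Fin n) => q (n - 1 - (i : ℕ)) ω)
        = Measure.pi (fun _ : Fin n => P.map (q 0)) :=
      Stmt3Aux.aux_pi P q hmeas hindep (fun m => hident m)
        (fun i : Fin n => n - 1 - (i : ℕ)) hφ2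
    have hmap : P.map (fun ω => (X0 ω, fun i : Fin n => q i ω))
        = P.map (fun ω => (X0 ω, fun i : Fin n => q (n - 1 - (i : ℕ)) ω)) := by
      rw [(indepFun_iff_map_prod_eq_prod_map_map hX0meas.aemeasurable hVmeas.aemeasurable).1 h1,
        (indepFun_iff_map_prod_eq_prod_map_map hX0meas.aemeasurable hWmeas.aemeasurable).1 h2,
        e1, e2]
    have hid2 : IdentDistrib (fun ω => (X0 ω, fun i : Fin n => q i ω))
        (fun ω => (X0 ω, fun i : Fin n => q (n - 1 - (i : ℕ)) ω)) P P :=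
      ⟨(hX0meas.prodMk hVmeas).aemeasurable, (hX0meas.prodMk hWmeas).aemeasurable, hmap⟩
    set Φ : ℝ × (Fin n → ℝ × ℝ) → ℝ :=
      fun p => Stmt3Aux.iter n (p.1, fun j => if h : j < n then p.2 ⟨j, h⟩ else (0, 0)) with hΦ
    have hΦmeas : Measurable Φ := by
      apply (Stmt3Aux.measurable_iter n).comp
      apply measurable_fst.prodMk
      apply measurable_pi_lambda
      intro j
      by_cases h : j < n
      · simp only [dif_pos h]
        exact (measurable_pi_apply (⟨j, h⟩ : Fin n)).comp measurable_snd
      · simpa only [dif_neg h] using measurable_const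
    have hXapp : X n = (Φ ∘ fun ω => (X0 ω, fun i : Fin n => q i ω)) := by
      funext ω
      have hXiter : ∀ k, X k ω = Stmt3Aux.iter k (X0 ω, fun j => q j ω) := by
        intro k
        induction k with
        | zero => exact hX0 ω
        | succ k ih => rw [hXrec k ω, ih]; rfl
      rw [hXiter n]
      show Stmt3Aux.iter n (X0 ω, fun j => q j ω)
        = Stmt3Aux.iter n (X0 ω, fun j =>
            if h : j < n then (fun i : Fin n => q i ω) ⟨j, h⟩ else (0, 0))
      exact Stmt3Aux.iter_congr n fun j hj => by rw [dif_pos hj]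
    have hYapp : Y n = (Φ ∘ fun ω => (X0 ω, fun i : Fin n => q (n - 1 - (i : ℕ)) ω)) := by
      funext ω
      show Y n ω = Stmt3Aux.iter n (X0 ω, fun j =>
        if h : j < n then (fun i : Fin n => q (n - 1 - (i : ℕ)) ω) ⟨j, h⟩ else (0, 0))
      have hcongr : Stmt3Aux.iter n (X0 ω, fun j =>
            if h : j < n then (fun i : Fin n => q (n - 1 - (i : ℕ)) ω) ⟨j, h⟩ else (0, 0))
          = Stmt3Aux.iter n (X0 ω, fun j => (fun i : ℕ => q i ω) (n - 1 - j)) :=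
        Stmt3Aux.iter_congr n fun j hj => by rw [dif_pos hj]
      rw [hcongr, Stmt3Aux.iter_rev n (X0 ω) (fun i => q i ω)]
    rw [hXapp, hYapp]
    exact hid2.comp hΦmeas
  have hint_eq : ∀ n, ∫ ω, F (X n ω) ∂P = ∫ ω, F (Y n ω) ∂P := fun n =>
    ((hXY n).comp F.continuous.measurable).integral_eq
  simp only [hint_eq]
  have hae := Stmt3Aux.ae_tendsto P ρ ε X0 hmeas hindep hident hρpos' hρneg' hεlog
  refine tendsto_integral_of_dominated_convergence (fun _ => ‖F‖)
    (fun n => (F.continuous.measurable.comp (hYmeas n)).aestronglyMeasurable)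
    (integrable_const _)
    (fun n => Eventually.of_forall fun ω => F.norm_coe_le_norm _)
    ?_
  filter_upwards [hae] with ω hω
  exact (F.continuous.tendsto _).comp hω
end

section
/- Let X_∞ be a real random variable that is not almost surely constant, and suppose that for every a ∈ R and every n, the conditional probability E(1{X_∞ = a} | F_n) is bounded above by p := sup_{b∈R} P(X_∞ = b) < 1, where F_n is a filtration whose limit σ-algebra makes X_∞ measurable. Then P(X_∞ = a) = 0 for all a ∈ R. -/
open MeasureTheory ProbabilityTheory Filter

/-- Let `X∞` be a real random variable that is not a.s. constant,
measurable w.r.t. the limit σ-algebra `⨆ n, 𝓕 n` of a filtration `𝓕`. Suppose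
`p < 1` bounds `P(X∞ = b)` for every `b`, and for every `a` and `n` the conditional
probability `E[1_{X∞ = a} | 𝓕 n]` is a.s. bounded above by `p`. Then
`P(X∞ = a) = 0` for all `a`. -/
theorem stmt5 {Ω : Type*} {m0 : MeasurableSpace Ω} (P : Measure Ω) [IsProbabilityMeasure P]
    (𝓕 : Filtration ℕ m0) (X : Ω → ℝ)
    (hX : Measurable[⨆ n, 𝓕 n] X)
    (hnc : ¬ ∃ c : ℝ, ∀ᵐ ω ∂P, X ω = c)
    (p : ℝ) (hp : p < 1)
    (hsup : ∀ b : ℝ, (P {ω | X ω = b}).toReal ≤ p)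
    (hcond : ∀ a : ℝ, ∀ n : ℕ, ∀ᵐ ω ∂P,
      (P[Set.indicator {ω | X ω = a} (fun _ => (1 : ℝ)) | 𝓕 n]) ω ≤ p) :
    ∀ a : ℝ, P {ω | X ω = a} = 0 := by
  intro a
  have hle : (⨆ n, 𝓕 n) ≤ m0 := iSup_le fun n => 𝓕.le n
  have hsm : MeasurableSet[⨆ n, 𝓕 n] {ω | X ω = a} := hX (measurableSet_singleton a)
  have hsm0 : MeasurableSet {ω | X ω = a} := hle _ hsm
  set g : Ω → ℝ := Set.indicator {ω | X ω = a} (fun _ => (1 : ℝ)) with hg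
  have hgint : Integrable g P := by
    refine (integrable_indicator_iff hsm0).2 ?_
    exact (integrableOn_const_iff (by simp)).2 (Or.inr (measure_lt_top _ _))
  have hgmeas : StronglyMeasurable[⨆ n, 𝓕 n] g :=
    (stronglyMeasurable_const.indicator hsm)
  have htend := hgint.tendsto_ae_condExp (ℱ := 𝓕) hgmeas
  have hall : ∀ᵐ ω ∂P, ∀ n, (P[g | 𝓕 n]) ω ≤ p := ae_all_iff.2 (hcond a)
  have hbound : ∀ᵐ ω ∂P, g ω ≤ p := by
    filter_upwards [htend, hall] with ω hω hωn
    exact le_of_tendsto hω (Filter.Eventually.of_forall hωn)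
  have : ∀ᵐ ω ∂P, ω ∉ {ω | X ω = a} := by
    filter_upwards [hbound] with ω hω hmem
    have h1 : g ω = 1 := Set.indicator_of_mem (show ω ∈ {ω | X ω = a} from hmem) _
    linarith
  simpa [ae_iff] using this
end

section
/- Let {(ρ_n, ε_n)}_{n≥1} be i.i.d. with ε_1 uniform on (-1,1), ρ_1 bounded with E(log|ρ_1|) < 0 and P(ρ_1 = 0) = 0, and ρ_1 independent of ε_1. Then there exist c < 0 < d, a finite measure φ on R with φ([c,d]) > 0, and α ∈ (0,1) such that inf_{c ≤ x ≤ d} P(ρ_1 x + ε_1 ∈ B) ≥ α φ(B) for all Borel sets B. -/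
open MeasureTheory ProbabilityTheory Filter

/-- Let `ε₁` be uniform on `(-1,1)`, `ρ₁` bounded with
`-∞ ≤ E(log|ρ₁|) < 0` and `P(ρ₁ = 0) = 0`, with `ρ₁` independent of `ε₁`. Then there
exist `c < 0 < d`, a finite measure `φ` with `φ([c,d]) > 0`, and `α ∈ (0,1)` such that
`P(ρ₁ x + ε₁ ∈ B) ≥ α φ(B)` for all `x ∈ [c,d]` and all Borel sets `B`. -/
theorem stmt18 {Ω : Type*} [MeasurableSpace Ω] (P : Measure Ω) [IsProbabilityMeasure P]
    (ρ ε : Ω → ℝ) (hρ : Measurable ρ) (hε : Measurable ε)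
    (hindep : IndepFun ρ ε P)
    (hunif : P.map ε = (2⁻¹ : ENNReal) • MeasureTheory.volume.restrict (Set.Ioo (-1 : ℝ) 1))
    (M : ℝ) (hbdd : ∀ᵐ ω ∂P, |ρ ω| ≤ M)
    (hρpos : ∫⁻ ω, ENNReal.ofReal (max (Real.log |ρ ω|) 0) ∂P < ⊤)
    (hρneg : ∫⁻ ω, ENNReal.ofReal (max (Real.log |ρ ω|) 0) ∂P
      < ∫⁻ ω, ENNReal.ofReal (max (-Real.log |ρ ω|) 0) ∂P)
    (hρne0 : P {ω | ρ ω = 0} = 0) :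
    ∃ (c d : ℝ), c < 0 ∧ 0 < d ∧
      ∃ (φ : Measure ℝ), IsFiniteMeasure φ ∧ 0 < φ (Set.Icc c d) ∧
        ∃ α : ℝ, 0 < α ∧ α < 1 ∧
          ∀ x ∈ Set.Icc c d, ∀ B : Set ℝ, MeasurableSet B →
            ENNReal.ofReal α * φ B ≤ P {ω | ρ ω * x + ε ω ∈ B} := by
  set m : ℝ := max M 1 with hm
  have hm1 : (1:ℝ) ≤ m := le_max_right _ _
  have hm0 : (0:ℝ) < m := lt_of_lt_of_le one_pos hm1
  set d : ℝ := (2*m)⁻¹ with hd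
  have hd0 : 0 < d := by positivity
  have hdhalf : d ≤ 1/2 := by
    rw [hd]
    rw [inv_le_comm₀ (by positivity) (by norm_num)]
    simp only [one_div, inv_inv]
    linarith
  have hmd : m * d = 1/2 := by
    rw [hd]; field_simp
  refine ⟨-d, d, by linarith, hd0,
    volume.restrict (Set.Ioo (-(1/2) : ℝ) (1/2)), inferInstance, ?_, 1/4, by norm_num,
    by norm_num, ?_⟩
  · rw [Measure.restrict_apply measurableSet_Icc]
    have hsub : Set.Ioo (-d) d ⊆ Set.Icc (-d) d ∩ Set.Ioo (-(1/2) : ℝ) (1/2) := by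
      intro y hy
      simp only [Set.mem_Ioo, Set.mem_Icc, Set.mem_inter_iff] at *
      exact ⟨⟨hy.1.le, hy.2.le⟩, by linarith [hy.1], by linarith [hy.2]⟩
    calc (0:ENNReal) < volume (Set.Ioo (-d) d) := by
            rw [Real.volume_Ioo]
            exact ENNReal.ofReal_pos.mpr (by linarith)
      _ ≤ volume (Set.Icc (-d) d ∩ Set.Ioo (-(1/2) : ℝ) (1/2)) := measure_mono hsub
  · intro x hx B hB
    have hxd : |x| ≤ d := abs_le.mpr ⟨hx.1, hx.2⟩
    have hmap : P.map (fun ω => (ρ ω, ε ω)) = (P.map ρ).prod (P.map ε) :=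
      (indepFun_iff_map_prod_eq_prod_map_map hρ.aemeasurable hε.aemeasurable).mp hindep
    have hS : MeasurableSet {p : ℝ × ℝ | p.1 * x + p.2 ∈ B} :=
      ((measurable_fst.mul_const x).add measurable_snd) hB
    have hPeq : P {ω | ρ ω * x + ε ω ∈ B}
        = ∫⁻ r, (P.map ε) (Prod.mk r ⁻¹' {p : ℝ × ℝ | p.1 * x + p.2 ∈ B}) ∂(P.map ρ) := by
      rw [← Measure.prod_apply hS, ← hmap, Measure.map_apply (hρ.prodMk hε) hS]
      rfl
    rw [hPeq]
    have hφB : (volume.restrict (Set.Ioo (-(1/2) : ℝ) (1/2))) B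
        = volume (B ∩ Set.Ioo (-(1/2) : ℝ) (1/2)) := Measure.restrict_apply hB
    rw [hφB]
    -- pointwise bound for |r| ≤ M
    have key : ∀ r : ℝ, |r| ≤ M →
        ENNReal.ofReal (1/4) * volume (B ∩ Set.Ioo (-(1/2) : ℝ) (1/2))
          ≤ (P.map ε) (Prod.mk r ⁻¹' {p : ℝ × ℝ | p.1 * x + p.2 ∈ B}) := by
      intro r hr
      have hrx : |r * x| ≤ 1/2 := by
        rw [abs_mul]
        calc |r| * |x| ≤ M * d :=
              mul_le_mul hr hxd (abs_nonneg x) ((abs_nonneg r).trans hr)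
          _ ≤ m * d := mul_le_mul_of_nonneg_right (le_max_left M 1) hd0.le
          _ = 1/2 := hmd
      have hpre : Prod.mk r ⁻¹' {p : ℝ × ℝ | p.1 * x + p.2 ∈ B}
          = (fun e => r * x + e) ⁻¹' B := rfl
      rw [hpre, hunif]
      have hBpre : MeasurableSet ((fun e => r * x + e) ⁻¹' B) :=
        (measurable_const_add (r*x)) hB
      rw [Measure.smul_apply, smul_eq_mul, Measure.restrict_apply hBpre]
      have hsub2 : (fun e => r * x + e) ⁻¹' (B ∩ Set.Ioo (-(1/2) : ℝ) (1/2))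
          ⊆ (fun e => r * x + e) ⁻¹' B ∩ Set.Ioo (-1 : ℝ) 1 := by
        intro e he
        rcases he with ⟨heB, he2⟩
        simp only [Set.mem_preimage, Set.mem_Ioo] at he2
        have habs := abs_le.mp hrx
        exact ⟨heB, by constructor <;> [linarith [he2.1]; linarith [he2.2]]⟩
      have htrans : volume ((fun e => r * x + e) ⁻¹' (B ∩ Set.Ioo (-(1/2) : ℝ) (1/2)))
          = volume (B ∩ Set.Ioo (-(1/2) : ℝ) (1/2)) :=
        measure_preimage_add volume (r*x) _
      calc ENNReal.ofReal (1/4) * volume (B ∩ Set.Ioo (-(1/2) : ℝ) (1/2))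
          ≤ 2⁻¹ * volume (B ∩ Set.Ioo (-(1/2) : ℝ) (1/2)) := by
            gcongr
            rw [show (2⁻¹ : ENNReal) = ENNReal.ofReal 2⁻¹ by
              rw [ENNReal.ofReal_inv_of_pos (by norm_num)]; norm_num]
            exact ENNReal.ofReal_le_ofReal (by norm_num)
        _ = 2⁻¹ * volume ((fun e => r * x + e) ⁻¹' (B ∩ Set.Ioo (-(1/2) : ℝ) (1/2))) := by
            rw [htrans]
        _ ≤ 2⁻¹ * volume ((fun e => r * x + e) ⁻¹' B ∩ Set.Ioo (-1 : ℝ) 1) :=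
            mul_le_mul_right (measure_mono hsub2) _
    have hms : MeasurableSet {y : ℝ | |y| ≤ M} :=
      measurableSet_le (measurable_id.abs) measurable_const
    have haer : ∀ᵐ r ∂(P.map ρ), |r| ≤ M :=
      (ae_map_iff hρ.aemeasurable hms).mpr hbdd
    have : IsProbabilityMeasure (P.map ρ) := Measure.isProbabilityMeasure_map hρ.aemeasurable
    calc ENNReal.ofReal (1/4) * volume (B ∩ Set.Ioo (-(1/2) : ℝ) (1/2))
        = ∫⁻ _, ENNReal.ofReal (1/4) * volume (B ∩ Set.Ioo (-(1/2) : ℝ) (1/2)) ∂(P.map ρ) := by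
          rw [lintegral_const, measure_univ, mul_one]
      _ ≤ ∫⁻ r, (P.map ε) (Prod.mk r ⁻¹' {p : ℝ × ℝ | p.1 * x + p.2 ∈ B}) ∂(P.map ρ) :=
          lintegral_mono_ae (haer.mono fun r hr => key r hr)
end
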